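/- arXiv:1810.00201 — 5 statements merged into one kernel-verified Lean document; each statement's English description precedes it below -/
import Mathlib

section
/- For integers d, m with 2 ≤ d < m ≤ 2d-1, and the contractions S_j(x) = x/d + (j/d)·(d-1)/(m-1) for j = 0,...,m-1, one has S_i ∘ S_{j+d} = S_{i+1} ∘ S_j for all 0 ≤ j ≤ m-d-1 and 0 ≤ i ≤ m-2, and moreover S_i ∘ S_k = S_ℓ ∘ S_j with (i,k) ≠ (ℓ,j) implies {(i,k),(ℓ,j)} = {(i,j+d),(i+1,j)} for some 0 ≤ j ≤ m-d-1. -/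
noncomputable def Smap (m d : ℕ) (j : ℕ) (x : ℝ) : ℝ :=
  x / d + (j : ℝ) / d * (((d : ℝ) - 1) / ((m : ℝ) - 1))

theorem stmt_0 (m d : ℕ) (hd : 2 ≤ d) (hdm : d < m) (hm : m ≤ 2 * d - 1) :
    (∀ i j : ℕ, i ≤ m - 2 → j ≤ m - d - 1 →
      Smap m d i ∘ Smap m d (j + d) = Smap m d (i + 1) ∘ Smap m d j) ∧
    (∀ i k l j : ℕ, i < m → k < m → l < m → j < m →
      Smap m d i ∘ Smap m d k = Smap m d l ∘ Smap m d j → (i, k) ≠ (l, j) →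
      ∃ i' j' : ℕ, j' ≤ m - d - 1 ∧
        (((i, k) = (i', j' + d) ∧ (l, j) = (i' + 1, j')) ∨
         ((l, j) = (i', j' + d) ∧ (i, k) = (i' + 1, j')))) := by
  have hdR : (0:ℝ) < d := by exact_mod_cast (by omega : 0 < d)
  have hd1 : (0:ℝ) < (d:ℝ) - 1 := by
    have : (1:ℝ) < d := by exact_mod_cast (by omega : 1 < d)
    linarith
  have hm1 : (0:ℝ) < (m:ℝ) - 1 := by
    have : (1:ℝ) < m := by exact_mod_cast (by omega : 1 < m)
    linarith
  constructor
  · intro i j _ _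
    funext x
    simp only [Smap, Function.comp_apply]
    push_cast
    field_simp
    ring
  · intro i k l j hi hk hl hj heq hne
    have h0 := congrFun heq 0
    simp only [Smap, Function.comp_apply] at h0
    have key : (k:ℝ) + i * d = j + l * d := by
      field_simp at h0
      have hq : (((d:ℝ) - 1) * ((d:ℝ) * ((m:ℝ) - 1))) ≠ 0 := by positivity
      apply mul_right_cancel₀ hq
      linear_combination ((d:ℝ) * ((m:ℝ) - 1)) * h0
    have keyn : k + i * d = j + l * d := by exact_mod_cast key
    rcases Nat.lt_trichotomy i l with h | h | h
    · obtain ⟨t, rfl⟩ := Nat.exists_eq_add_of_lt h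
      have key2 : k + i * d = j + (i * d + t * d + d) := by
        rw [keyn]; ring
      have hk2 : k = j + t * d + d := by linarith
      have ht : t = 0 := by
        by_contra ht
        have : d ≤ t * d := Nat.le_mul_of_pos_left d (by omega)
        have hm' : m + 1 ≤ 2 * d := by omega
        omega
      subst ht
      simp only [Nat.zero_mul, Nat.add_zero] at hk2
      exact ⟨i, j, by omega, Or.inl ⟨by simp [hk2], by simp⟩⟩
    · subst h
      have : k = j := by omega
      exact absurd (by simp [this]) hne
    · obtain ⟨t, rfl⟩ := Nat.exists_eq_add_of_lt h
      have key2 : k + (l * d + t * d + d) = j + l * d := by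
        rw [← keyn]; ring
      have hj2 : j = k + t * d + d := by linarith
      have ht : t = 0 := by
        by_contra ht
        have : d ≤ t * d := Nat.le_mul_of_pos_left d (by omega)
        have hm' : m + 1 ≤ 2 * d := by omega
        omega
      subst ht
      simp only [Nat.zero_mul, Nat.add_zero] at hj2
      exact ⟨l, k, by omega, Or.inr ⟨by simp [hj2], by simp⟩⟩
end

section
/- For every pair of coprime positive integers (k,i) with k > i ≥ 1, the pair {k,i} occurs as a label at level n of the Euclidean tree if and only if e(k,i) = n, where e(k,i) denotes the number of subtraction steps needed to reduce the pair {k,i} to {1,1} via the simple Euclidean algorithm (repeatedly replacing the larger entry by the difference of the two entries). -/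
def eucLevel : ℕ → Set (ℕ × ℕ)
  | 0 => {(1, 1)}
  | 1 => {(2, 1)}
  | (n + 2) => {c | ∃ q ∈ eucLevel (n + 1), c = (q.1, q.1 + q.2) ∨ c = (q.1 + q.2, q.2)}

def eSteps : ℕ → ℕ → ℕ
  | a, b =>
    if h : 1 ≤ b ∧ b < a then eSteps (a - b) b + 1
    else if h2 : 1 ≤ a ∧ a < b then eSteps a (b - a) + 1
    else 0
termination_by a b => a + b
decreasing_by all_goals omega

lemma eSteps_comm (a b : ℕ) : eSteps a b = eSteps b a := by
  induction a, b using eSteps.induct with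
  | case1 a b h ih =>
    rw [eSteps]; conv_rhs => rw [eSteps]
    rw [dif_pos h, dif_neg (by omega : ¬(1 ≤ a ∧ a < b)), dif_pos h, ih]
  | case2 a b h h2 ih =>
    rw [eSteps]; conv_rhs => rw [eSteps]
    rw [dif_neg h, dif_pos h2, dif_pos h2, ih]
  | case3 a b h h2 =>
    rw [eSteps]; conv_rhs => rw [eSteps]
    rw [dif_neg h, dif_neg h2, dif_neg h2, dif_neg h]

lemma eucLevel_pos : ∀ n, ∀ p ∈ eucLevel n, 1 ≤ p.1 ∧ 1 ≤ p.2 := by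
  intro n
  induction n using Nat.strong_induction_on with
  | _ n ih =>
    match n with
    | 0 => rintro p hp; simp [eucLevel] at hp; simp [hp]
    | 1 => rintro p hp; simp [eucLevel] at hp; simp [hp]
    | (m + 2) =>
      rintro p hp
      obtain ⟨q, hq, hc⟩ := hp
      have := ih (m + 1) (by omega) q hq
      rcases hc with h | h <;> subst h <;> simp <;> omega

lemma eSteps_of_mem : ∀ n, ∀ p ∈ eucLevel n, eSteps p.1 p.2 = n := by
  intro n
  induction n using Nat.strong_induction_on with
  | _ n ih =>
    match n with
    | 0 =>
      rintro p hp; simp [eucLevel] at hp; subst hp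
      rw [eSteps]; norm_num
    | 1 =>
      rintro p hp; simp [eucLevel] at hp; subst hp
      rw [eSteps]; norm_num; rw [eSteps]; norm_num
    | (m + 2) =>
      rintro p hp
      obtain ⟨q, hq, hc⟩ := hp
      have hpos := eucLevel_pos (m + 1) q hq
      have hstep := ih (m + 1) (by omega) q hq
      rcases hc with h | h <;> subst h <;> simp only
      · rw [eSteps, dif_neg (by omega : ¬(1 ≤ q.1 + q.2 ∧ q.1 + q.2 < q.1)),
          dif_pos (by omega : 1 ≤ q.1 ∧ q.1 < q.1 + q.2)]
        simpa using hstep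
      · rw [eSteps, dif_pos (by omega : 1 ≤ q.2 ∧ q.2 < q.1 + q.2)]
        simpa using hstep

lemma eSteps_two_one : eSteps 2 1 = 1 := by
  rw [eSteps]; norm_num; rw [eSteps]; norm_num

lemma mem_of_eSteps : ∀ k i : ℕ, 1 ≤ i → i < k → Nat.gcd k i = 1 →
    ((k, i) ∈ eucLevel (eSteps k i) ∨ (i, k) ∈ eucLevel (eSteps k i)) := by
  intro k
  induction k using Nat.strong_induction_on with
  | _ k ih =>
    intro i hi hik hcop
    by_cases hk2 : k = 2 ∧ i = 1
    · obtain ⟨rfl, rfl⟩ := hk2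
      left; rw [eSteps_two_one]; simp [eucLevel]
    · have hki : 1 ≤ k - i := by omega
      have hne : k - i ≠ i := by
        intro h
        have hdvd : i ∣ k := ⟨2, by omega⟩
        have := Nat.dvd_gcd hdvd (dvd_refl i)
        rw [hcop] at this
        have := Nat.le_of_dvd one_pos this
        omega
      have hcop' : Nat.gcd (k - i) i = 1 :=
        (Nat.coprime_sub_self_left hik.le).mpr hcop
      have hstep : eSteps k i = eSteps (k - i) i + 1 := by
        rw [eSteps, dif_pos ⟨hi, hik⟩]
      have H : (k - i, i) ∈ eucLevel (eSteps (k - i) i) ∨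
          (i, k - i) ∈ eucLevel (eSteps (k - i) i) := by
        rcases lt_or_gt_of_ne hne with hlt | hgt
        · have := ih i hik (k - i) hki hlt (by rwa [Nat.gcd_comm])
          rw [eSteps_comm]
          tauto
        · exact ih (k - i) (by omega) i hi hgt hcop'
      have hm : 1 ≤ eSteps (k - i) i := by
        rw [eSteps]
        split
        · omega
        · split
          · omega
          · omega
      obtain ⟨m', hm'⟩ : ∃ m', eSteps (k - i) i = m' + 1 :=
        ⟨eSteps (k - i) i - 1, by omega⟩
      rw [hstep, hm']
      rw [hm'] at H
      rcases H with H | H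
      · left
        exact ⟨(k - i, i), H, Or.inr (by simp [Prod.ext_iff]; omega)⟩
      · right
        exact ⟨(i, k - i), H, Or.inl (by simp [Prod.ext_iff]; omega)⟩

theorem stmt_2 (k i n : ℕ) (hi : 1 ≤ i) (hik : i < k) (hcop : Nat.gcd k i = 1) :
    ((k, i) ∈ eucLevel n ∨ (i, k) ∈ eucLevel n) ↔ eSteps k i = n := by
  constructor
  · rintro (h | h)
    · exact eSteps_of_mem n _ h
    · rw [eSteps_comm]; exact eSteps_of_mem n _ h
  · rintro rfl
    exact mem_of_eSteps k i hi hik hcop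
end

section
/- Let f : ℂ → ℂ be analytic on the disk U = {|x| < R} for some R > 1 except possibly at x = 1, and suppose H(x) := Σ_{n≥0} h(n) x^n satisfies H(x) = x/(x−1)² · T(x) on U ∖ {1}, where T is analytic on U. Then h(n) = T(1)·n − T'(1) + d(n−1) for a sequence d(n) → 0, and in particular lim_{n→∞} h(n)/n = T(1). -/
open Filter

private lemma dslope_analyticOnNhd {f : ℂ → ℂ} {s : Set ℂ} (h1 : (1:ℂ) ∈ s)
    (hf : AnalyticOnNhd ℂ f s) : AnalyticOnNhd ℂ (dslope f 1) s := by
  intro x hx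
  rcases eq_or_ne x 1 with rfl | hx1
  · obtain ⟨p, hp⟩ := hf 1 h1
    exact ⟨p.fslope, hp.has_fpower_series_dslope_fslope⟩
  · have ha : AnalyticAt ℂ (fun y => (f y - f 1) / (y - 1)) x := by
      exact ((hf x hx).sub analyticAt_const).div (analyticAt_id.sub analyticAt_const)
        (sub_ne_zero.2 hx1)
    apply ha.congr
    have hev : ∀ᶠ y in nhds x, y ≠ 1 :=
      eventually_of_mem (isOpen_ne.mem_nhds hx1) fun y hy => hy
    filter_upwards [hev] with y hy
    rw [dslope_of_ne f hy, slope_def_field]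

theorem stmt_6 (R : ℝ) (hR : 1 < R) (T : ℂ → ℂ)
    (hT : AnalyticOnNhd ℂ T (Metric.ball 0 R)) (h : ℕ → ℂ)
    (hH : ∀ x : ℂ, ‖x‖ < 1 → HasSum (fun n => h n * x ^ n) (x / (x - 1) ^ 2 * T x)) :
    ∃ d : ℕ → ℂ, Tendsto d atTop (nhds 0) ∧
      (∀ n : ℕ, 1 ≤ n → h n = T 1 * n - deriv T 1 + d (n - 1)) ∧
      Tendsto (fun n : ℕ => h n / n) atTop (nhds (T 1)) := by
  classical
  set g : ℕ → ℂ := fun n => h n - T 1 * n + deriv T 1 with hgdef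
  have h1mem : (1:ℂ) ∈ Metric.ball (0:ℂ) R := by
    simp only [Metric.mem_ball, dist_zero_right, norm_one]; exact hR
  -- the auxiliary function N and its properties
  set N : ℂ → ℂ := fun x => x * (T x - T 1) - deriv T 1 * (x - 1) with hNdef
  have hNa : AnalyticOnNhd ℂ N (Metric.ball 0 R) := fun x hx =>
    (analyticAt_id.mul ((hT x hx).sub analyticAt_const)).sub
      (analyticAt_const.mul (analyticAt_id.sub analyticAt_const))
  have hN1 : N 1 = 0 := by simp [hNdef]
  have hderivN : deriv N 1 = 0 := by
    have hTd : HasDerivAt T (deriv T 1) 1 := (hT 1 h1mem).differentiableAt.hasDerivAt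
    have hd : HasDerivAt N (1 * (T 1 - T 1) + 1 * deriv T 1 - deriv T 1 * 1) 1 := by
      exact ((hasDerivAt_id 1).mul (hTd.sub_const (T 1))).sub
        (((hasDerivAt_id 1).sub_const 1).const_mul (deriv T 1))
    rw [hd.deriv]; ring
  -- F is the analytic extension of N x / (x-1)^2
  set F : ℂ → ℂ := dslope (dslope N 1) 1 with hFdef
  have hFa : AnalyticOnNhd ℂ F (Metric.ball 0 R) :=
    dslope_analyticOnNhd h1mem (dslope_analyticOnNhd h1mem hNa)
  have hFx : ∀ x : ℂ, x ≠ 1 → F x = N x / (x - 1) ^ 2 := by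
    intro x hx
    have hsub : x - 1 ≠ 0 := sub_ne_zero.2 hx
    rw [hFdef, dslope_of_ne _ hx, slope_def_field, dslope_same, hderivN,
      dslope_of_ne _ hx, slope_def_field, hN1, sub_zero, sub_zero, div_div, ← sq]
  -- power series identity on the unit ball
  have hFsum : ∀ x : ℂ, ‖x‖ < 1 → HasSum (fun n => g n * x ^ n) (F x) := by
    intro x hx
    have hx1 : x ≠ 1 := by rintro rfl; simp at hx
    have hsub : x - 1 ≠ 0 := sub_ne_zero.2 hx1
    have h1sub : (1:ℂ) - x ≠ 0 := sub_ne_zero.2 (Ne.symm hx1)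
    have s1 := hH x hx
    have s2 := (hasSum_coe_mul_geometric_of_norm_lt_one hx).mul_left (T 1)
    have s3 := (hasSum_geometric_of_norm_lt_one hx).mul_left (deriv T 1)
    have := (s1.sub s2).add s3
    have heq : (fun n : ℕ => h n * x ^ n - T 1 * ((n : ℂ) * x ^ n) + deriv T 1 * x ^ n)
        = fun n => g n * x ^ n := by
      funext n; simp only [hgdef]; ring
    rw [heq] at this
    convert this using 1
    · rfl
    rw [hFx x hx1, hNdef]
    field_simp
    ring
  -- the power series of F via ofScalars
  set q : FormalMultilinearSeries ℂ ℂ ℂ := FormalMultilinearSeries.ofScalars ℂ g with hqdef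
  have hq : HasFPowerSeriesOnBall F q 0 1 := by
    refine ⟨?_, one_pos, ?_⟩
    · refine ENNReal.le_of_forall_nnreal_lt fun s hs => ?_
      have hs1 : (s : ℝ) < 1 := by exact_mod_cast hs
      have hnorm : ‖((s : ℝ) : ℂ)‖ < 1 := by
        rwa [Complex.norm_real, Real.norm_eq_abs, abs_of_nonneg s.coe_nonneg]
      have hsum := (hFsum _ hnorm).summable
      have ht := hsum.tendsto_atTop_zero.norm
      simp only [norm_zero] at ht
      apply q.le_radius_of_tendsto (l := 0)
      convert ht using 2 with n
      rw [hqdef, FormalMultilinearSeries.ofScalars_norm, norm_mul, norm_pow,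
        Complex.norm_real, Real.norm_eq_abs, abs_of_nonneg s.coe_nonneg]
    · intro y hy
      have hy' : ‖y‖ < 1 := by
        have := EMetric.mem_ball.1 hy
        rw [edist_zero_right] at this
        rw [← ofReal_norm, ENNReal.ofReal_lt_one] at this
        exact this
      have := hFsum y hy'
      simp only [zero_add, hqdef, FormalMultilinearSeries.ofScalars_apply_eq, smul_eq_mul]
      exact this
  -- F has a power series of radius > 1 by Cauchy's theorem
  have hRhalf : (0:ℝ) ≤ (1 + R) / 2 := by linarith
  set r : NNReal := ⟨(1 + R) / 2, hRhalf⟩ with hrdef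
  have hr1 : (1:ℝ) < r := by show (1:ℝ) < (1 + R) / 2; linarith
  have hrR : (r:ℝ) < R := by show (1 + R) / 2 < R; linarith
  have hrpos : 0 < r := lt_of_le_of_lt zero_le_one (by exact_mod_cast hr1)
  have hdiff : DifferentiableOn ℂ F (Metric.closedBall 0 (r:ℝ)) :=
    (hFa.mono (Metric.closedBall_subset_ball hrR)).differentiableOn
  have hpb := hdiff.hasFPowerSeriesOnBall hrpos
  have hqp : q = cauchyPowerSeries F 0 r :=
    hq.hasFPowerSeriesAt.eq_formalMultilinearSeries hpb.hasFPowerSeriesAt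
  have h1lt : (1 : ENNReal) < q.radius := by
    rw [hqp]
    exact lt_of_lt_of_le (by exact_mod_cast hr1) hpb.r_le
  -- coefficients tend to zero
  obtain ⟨a, ha, hlo⟩ := q.isLittleO_of_lt_radius (r := 1) (by exact_mod_cast h1lt)
  have hkey : Tendsto g atTop (nhds 0) := by
    rw [tendsto_zero_iff_norm_tendsto_zero]
    have := hlo.isBigO.trans_tendsto
      (tendsto_pow_atTop_nhds_zero_of_lt_one ha.1.le ha.2)
    convert this using 2 with n
    rw [hqdef, FormalMultilinearSeries.ofScalars_norm]
    simp
  -- conclude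
  refine ⟨fun n => g (n + 1), hkey.comp (tendsto_add_atTop_nat 1), ?_, ?_⟩
  · intro n hn
    have hn' : n - 1 + 1 = n := Nat.succ_pred_eq_of_pos hn
    simp only [hn', hgdef]
    ring
  · have hinv : Tendsto (fun n : ℕ => ((n:ℂ))⁻¹) atTop (nhds 0) := by
      have : Tendsto (fun n : ℕ => ((1 / (n:ℝ) : ℝ) : ℂ)) atTop (nhds ((0:ℝ):ℂ)) :=
        (Complex.continuous_ofReal.tendsto 0).comp tendsto_one_div_atTop_nhds_zero_nat
      simpa [one_div] using this
    have hlim : Tendsto (fun n : ℕ => g n * ((n:ℂ))⁻¹ + T 1 - deriv T 1 * ((n:ℂ))⁻¹)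
        atTop (nhds (0 * 0 + T 1 - deriv T 1 * 0)) :=
      ((hkey.mul hinv).add_const (T 1)).sub (hinv.const_mul (deriv T 1))
    simp only [zero_mul, mul_zero, zero_add, sub_zero] at hlim
    apply hlim.congr'
    filter_upwards [eventually_ge_atTop 1] with n hn
    have hne : ((n:ℂ)) ≠ 0 := Nat.cast_ne_zero.2 (by omega)
    field_simp [hgdef]
    ring
end

section
/- The generating function counting total occurrences of labels in the Euclidean tree satisfies Σ_{k≥2} k·A_k(x) = 2x/(1−3x) as formal power series (equivalently, for |x| < 1/3), where A_k(x) = Σ_{1≤i≤k, gcd(i,k)=1} x^{e(k,i)}. -/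
set_option maxHeartbeats 1000000

lemma eSteps_left {a b : ℕ} (h1 : 1 ≤ b) (h2 : b < a) :
    eSteps a b = eSteps (a - b) b + 1 := by
  rw [eSteps]
  simp [h1, h2]

lemma eSteps_right {a b : ℕ} (h1 : 1 ≤ a) (h2 : a < b) :
    eSteps a b = eSteps a (b - a) + 1 := by
  rw [eSteps]
  have hna : ¬(1 ≤ b ∧ b < a) := by omega
  simp [hna, h1, h2]

lemma eSteps_none {a b : ℕ} (h : ¬(1 ≤ b ∧ b < a)) (h2 : ¬(1 ≤ a ∧ a < b)) :
    eSteps a b = 0 := by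
  rw [eSteps]
  simp [h, h2]

lemma eSteps_bound : ∀ a b : ℕ, 1 ≤ a → 1 ≤ b → Nat.gcd a b = 1 →
    a ≤ 2 ^ eSteps a b ∧ b ≤ 2 ^ eSteps a b := by
  have key : ∀ N a b : ℕ, a + b ≤ N → 1 ≤ a → 1 ≤ b → Nat.gcd a b = 1 →
      a ≤ 2 ^ eSteps a b ∧ b ≤ 2 ^ eSteps a b := by
    intro N
    induction N with
    | zero => intro a b h; omega
    | succ N ih =>
      intro a b h ha hb hg
      by_cases h1 : 1 ≤ b ∧ b < a
      · have hg' : Nat.gcd (a - b) b = 1 := by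
          have : Nat.gcd (a - b) b = Nat.gcd a b := by
            conv_rhs => rw [show a = (a - b) + b by omega]
            rw [Nat.gcd_comm (a - b) b, Nat.gcd_comm ((a - b) + b) b,
              Nat.gcd_add_self_right]
          omega
        obtain ⟨h3, h4⟩ := ih (a - b) b (by omega) (by omega) hb hg'
        rw [eSteps_left h1.1 h1.2]
        rw [pow_succ]
        constructor <;> omega
      · by_cases h2 : 1 ≤ a ∧ a < b
        · have hg' : Nat.gcd a (b - a) = 1 := by
            have : Nat.gcd a (b - a) = Nat.gcd a b := by
              conv_rhs => rw [show b = (b - a) + a by omega]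
              rw [Nat.gcd_add_self_right]
            omega
          obtain ⟨h3, h4⟩ := ih a (b - a) (by omega) ha (by omega) hg'
          rw [eSteps_right h2.1 h2.2]
          rw [pow_succ]
          constructor <;> omega
        · have hab : a = b := by omega
          subst hab
          rw [Nat.gcd_self] at hg
          rw [eSteps_none h1 h2]
          simp [hg]
  exact fun a b => key (a + b) a b le_rfl

/-- Level sets of the Euclidean tree (unordered pairs written with larger entry first). -/
def Tlev (n : ℕ) : Finset (ℕ × ℕ) :=
  (Finset.Icc 1 (2 ^ n) ×ˢ Finset.Icc 1 (2 ^ n)).filter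
    fun p => p.2 < p.1 ∧ Nat.gcd p.2 p.1 = 1 ∧ eSteps p.1 p.2 = n

lemma mem_Tlev {n a b : ℕ} :
    (a, b) ∈ Tlev n ↔ 1 ≤ b ∧ b < a ∧ Nat.gcd b a = 1 ∧ eSteps a b = n := by
  simp only [Tlev, Finset.mem_filter, Finset.mem_product, Finset.mem_Icc]
  constructor
  · rintro ⟨⟨h1, h2⟩, h3, h4, h5⟩
    exact ⟨h2.1, h3, h4, h5⟩
  · rintro ⟨h1, h2, h3, h4⟩
    have hb := eSteps_bound b a h1 (by omega) h3
    rw [eSteps_comm b a, h4] at hb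
    exact ⟨⟨⟨by omega, hb.2⟩, ⟨h1, hb.1⟩⟩, h2, h3, h4⟩

lemma Tlev_zero : Tlev 0 = ∅ := by
  ext ⟨a, b⟩
  simp only [mem_Tlev, Finset.notMem_empty, iff_false]
  rintro ⟨h1, h2, h3, h4⟩
  rw [eSteps_left h1 h2] at h4
  omega

lemma Tlev_one : Tlev 1 = {(2, 1)} := by
  ext ⟨a, b⟩
  simp only [mem_Tlev, Finset.mem_singleton, Prod.mk.injEq]
  constructor
  · rintro ⟨h1, h2, h3, h4⟩
    rw [eSteps_left h1 h2] at h4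
    have h5 : eSteps (a - b) b = 0 := by omega
    have hne1 : ¬(1 ≤ b ∧ b < a - b) := by
      intro hc
      rw [eSteps_left hc.1 hc.2] at h5
      omega
    have hne2 : ¬(1 ≤ a - b ∧ a - b < b) := by
      intro hc
      rw [eSteps_right hc.1 hc.2] at h5
      omega
    have hab : a - b = b := by omega
    have hdvd : b ∣ a := ⟨2, by omega⟩
    have : Nat.gcd b a = b := Nat.gcd_eq_left hdvd
    omega
  · rintro ⟨rfl, rfl⟩
    refine ⟨le_rfl, by omega, by norm_num, ?_⟩
    rw [eSteps_left (by omega) (by omega)]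
    norm_num [eSteps_none]

lemma Tlev_succ {n : ℕ} (hn : 1 ≤ n) :
    Tlev (n + 1) = (Tlev n).image (fun p => (p.1 + p.2, p.1)) ∪
      (Tlev n).image (fun p => (p.1 + p.2, p.2)) := by
  ext ⟨a, b⟩
  simp only [Finset.mem_union, Finset.mem_image, Prod.exists, mem_Tlev, Prod.mk.injEq]
  constructor
  · rintro ⟨h1, h2, h3, h4⟩
    rw [eSteps_left h1 h2] at h4
    have h5 : eSteps (a - b) b = n := by omega
    rcases lt_trichotomy (a - b) b with hlt | heq | hgt
    · -- parent (b, a - b), child along first map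
      left
      refine ⟨b, a - b, ?_, by omega, rfl⟩
      have h6 : 1 ≤ a - b := by omega
      have hg : Nat.gcd (a - b) b = 1 := by
        have : Nat.gcd b (a - b) = Nat.gcd b a := by
          conv_rhs => rw [show a = (a - b) + b by omega]
          rw [Nat.gcd_add_self_right]
        rw [Nat.gcd_comm]
        omega
      exact ⟨h6, hlt, hg, by rw [eSteps_comm]; exact h5⟩
    · -- a = 2b, forces (2,1), contradiction with n ≥ 1
      exfalso
      have hdvd : b ∣ a := ⟨2, by omega⟩
      have hb1 : Nat.gcd b a = b := Nat.gcd_eq_left hdvd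
      have hb : b = 1 := by omega
      have ha : a = 2 := by omega
      subst hb; subst ha
      rw [eSteps_none (by omega) (by omega)] at h5
      omega
    · -- parent (a - b, b), child along second map
      right
      refine ⟨a - b, b, ?_, by omega, rfl⟩
      have hg : Nat.gcd b (a - b) = 1 := by
        have : Nat.gcd b (a - b) = Nat.gcd b a := by
          conv_rhs => rw [show a = (a - b) + b by omega]
          rw [Nat.gcd_add_self_right]
        omega
      exact ⟨h1, hgt, hg, h5⟩
  · rintro (⟨k, i, ⟨hi, hik, hg, he⟩, rfl, rfl⟩ | ⟨k, i, ⟨hi, hik, hg, he⟩, rfl, rfl⟩)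
    · -- child (k + i, k)
      refine ⟨by omega, by omega, ?_, ?_⟩
      · have : Nat.gcd k (k + i) = Nat.gcd k i := by
          rw [show k + i = i + k by omega, Nat.gcd_add_self_right]
        rw [this, Nat.gcd_comm]
        exact hg
      · rw [eSteps_left (by omega : 1 ≤ k) (by omega : k < k + i),
          show k + i - k = i by omega, eSteps_comm i k, he]
    · -- child (k + i, i)
      refine ⟨hi, by omega, ?_, ?_⟩
      · rw [Nat.gcd_add_self_right]; exact hg
      · rw [eSteps_left (by omega : 1 ≤ i) (by omega : i < k + i),
          show k + i - i = k by omega, he]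

def Lsum (n : ℕ) : ℕ := ∑ p ∈ Tlev n, p.1
def Ssum (n : ℕ) : ℕ := ∑ p ∈ Tlev n, p.2

lemma child1_injOn (n : ℕ) :
    Set.InjOn (fun p : ℕ × ℕ => (p.1 + p.2, p.1)) (Tlev n) := by
  rintro ⟨a, b⟩ _ ⟨c, d⟩ _ h
  simp only [Prod.mk.injEq] at h ⊢
  omega

lemma child2_injOn (n : ℕ) :
    Set.InjOn (fun p : ℕ × ℕ => (p.1 + p.2, p.2)) (Tlev n) := by
  rintro ⟨a, b⟩ _ ⟨c, d⟩ _ h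
  simp only [Prod.mk.injEq] at h ⊢
  omega

lemma children_disjoint (n : ℕ) :
    Disjoint ((Tlev n).image (fun p => (p.1 + p.2, p.1)))
      ((Tlev n).image (fun p => (p.1 + p.2, p.2))) := by
  rw [Finset.disjoint_left]
  rintro ⟨a, b⟩ h1 h2
  simp only [Finset.mem_image, Prod.exists, Prod.mk.injEq] at h1 h2
  obtain ⟨k, i, hm, rfl, rfl⟩ := h1
  obtain ⟨k', i', hm', he, hb⟩ := h2
  rw [mem_Tlev] at hm hm'
  omega

lemma LS_closed : ∀ n : ℕ, Lsum (n + 1) = 2 * 3 ^ n ∧ Ssum (n + 1) = 3 ^ n := by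
  intro n
  induction n with
  | zero => simp [Lsum, Ssum, Tlev_one]
  | succ n ih =>
    have hT := Tlev_succ (n := n + 1) (by omega)
    constructor
    · rw [Lsum, hT, Finset.sum_union (children_disjoint _),
        Finset.sum_image (child1_injOn _), Finset.sum_image (child2_injOn _),
        Finset.sum_add_distrib]
      have h1 : ∑ p ∈ Tlev (n + 1), p.1 = 2 * 3 ^ n := ih.1
      have h2 : ∑ p ∈ Tlev (n + 1), p.2 = 3 ^ n := ih.2
      rw [h1, h2]; ring
    · rw [Ssum, hT, Finset.sum_union (children_disjoint _),
        Finset.sum_image (child1_injOn _), Finset.sum_image (child2_injOn _)]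
      have h1 : ∑ p ∈ Tlev (n + 1), p.1 = 2 * 3 ^ n := ih.1
      have h2 : ∑ p ∈ Tlev (n + 1), p.2 = 3 ^ n := ih.2
      rw [h1, h2]; ring

/-- The summand attached to a pair `(k, i)`. -/
noncomputable def Fw (x : ℝ) (p : ℕ × ℕ) : ℝ :=
  if 1 ≤ p.2 ∧ p.2 < p.1 ∧ Nat.gcd p.2 p.1 = 1 then (p.1 : ℝ) * x ^ eSteps p.1 p.2 else 0

lemma Fw_of_mem {x : ℝ} {n : ℕ} {p : ℕ × ℕ} (hp : p ∈ Tlev n) :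
    Fw x p = (p.1 : ℝ) * x ^ n := by
  obtain ⟨a, b⟩ := p
  rw [mem_Tlev] at hp
  rw [Fw, if_pos ⟨hp.1, hp.2.1, hp.2.2.1⟩, hp.2.2.2]

lemma Lsum_le (n : ℕ) : Lsum n ≤ 2 * 3 ^ n := by
  cases n with
  | zero => simp [Lsum, Tlev_zero]
  | succ n =>
    rw [(LS_closed n).1]
    have : (3:ℕ) ^ n ≤ 3 ^ (n + 1) := Nat.pow_le_pow_right (by omega) (by omega)
    omega

lemma fiber_hasSum (x : ℝ) (n : ℕ) :
    HasSum (fun c : {p // p ∈ Tlev n} => Fw x c.1) ((Lsum n : ℝ) * x ^ n) := by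
  have h := hasSum_fintype (fun c : {p // p ∈ Tlev n} => Fw x c.1)
  have he : ∑ c : {p // p ∈ Tlev n}, Fw x c.1 = (Lsum n : ℝ) * x ^ n := by
    rw [Finset.sum_coe_sort (Tlev n) (Fw x)]
    rw [Finset.sum_congr rfl (fun p hp => Fw_of_mem hp), ← Finset.sum_mul]
    congr 1
    rw [Lsum, Nat.cast_sum]
  rwa [he] at h

noncomputable def Agen (k : ℕ) (x : ℝ) : ℝ :=
  ∑ i ∈ Finset.Icc 1 k, if Nat.gcd i k = 1 then x ^ eSteps k i else 0

theorem stmt_7 (x : ℝ) (hx : |x| < 1 / 3) :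
    ∑' k : ℕ, ((k + 2 : ℕ) : ℝ) * Agen (k + 2) x = 2 * x / (1 - 3 * x) := by
  have hxabs : (0:ℝ) ≤ |x| := abs_nonneg x
  have h3x : ‖3 * x‖ < 1 := by
    rw [Real.norm_eq_abs, abs_mul, abs_of_nonneg (by norm_num : (0:ℝ) ≤ 3)]
    linarith
  -- the injection from the disjoint union of levels into pairs
  let ι : (Σ n : ℕ, {p // p ∈ Tlev n}) → ℕ × ℕ := fun s => s.2.1
  have hinj : Function.Injective ι := by
    rintro ⟨n, ⟨⟨a, b⟩, hp⟩⟩ ⟨m, ⟨⟨c, d⟩, hq⟩⟩ h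
    simp only [ι] at h
    rw [mem_Tlev] at hp hq
    cases h
    have hnm : n = m := by omega
    subst hnm
    rfl
  have hrange : ∀ p, p ∉ Set.range ι → Fw x p = 0 := by
    rintro ⟨a, b⟩ hp
    by_contra h0
    apply hp
    rw [Fw] at h0
    by_cases hc : 1 ≤ b ∧ b < a ∧ Nat.gcd b a = 1
    · exact ⟨⟨eSteps a b, ⟨(a, b), mem_Tlev.2 ⟨hc.1, hc.2.1, hc.2.2, rfl⟩⟩⟩, rfl⟩
    · rw [if_neg hc] at h0; exact absurd rfl h0
  -- norm summability over the sigma type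
  have hnorm : Summable fun s : (Σ n : ℕ, {p // p ∈ Tlev n}) => ‖Fw x (ι s)‖ := by
    rw [summable_sigma_of_nonneg (fun _ => norm_nonneg _)]
    constructor
    · intro n; exact Summable.of_finite
    · refine Summable.of_nonneg_of_le (f := fun n => 2 * (3 * |x|) ^ n)
        (fun n => tsum_nonneg fun c => norm_nonneg _) (fun n => ?_)
        ((summable_geometric_of_lt_one (by positivity) (by linarith)).mul_left 2)
      rw [tsum_fintype]
      have e1 : ∑ c : {p // p ∈ Tlev n}, ‖Fw x (ι ⟨n, c⟩)‖ =
          ∑ p ∈ Tlev n, ‖Fw x p‖ := Finset.sum_coe_sort (Tlev n) (fun p => ‖Fw x p‖)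
      rw [e1]
      have e2 : ∀ p ∈ Tlev n, ‖Fw x p‖ = (p.1 : ℝ) * |x| ^ n := by
        intro p hp
        rw [Fw_of_mem hp, norm_mul, norm_pow, Real.norm_eq_abs, Real.norm_eq_abs,
          Nat.abs_cast]
      rw [Finset.sum_congr rfl e2, ← Finset.sum_mul]
      have e3 : ∑ p ∈ Tlev n, (p.1 : ℝ) = (Lsum n : ℝ) := by rw [Lsum]; push_cast; rfl
      rw [e3]
      have e4 : (Lsum n : ℝ) ≤ 2 * 3 ^ n := by
        have := Lsum_le n
        calc (Lsum n : ℝ) ≤ ((2 * 3 ^ n : ℕ) : ℝ) := by exact_mod_cast this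
          _ = 2 * 3 ^ n := by push_cast; ring
      calc (Lsum n : ℝ) * |x| ^ n ≤ 2 * 3 ^ n * |x| ^ n := by
            apply mul_le_mul_of_nonneg_right e4 (by positivity)
        _ = 2 * (3 * |x|) ^ n := by rw [mul_pow]; ring
  have hsig : Summable fun s : (Σ n : ℕ, {p // p ∈ Tlev n}) => Fw x (ι s) :=
    Summable.of_norm hnorm
  have hsum_rows : HasSum (fun n : ℕ => (Lsum n : ℝ) * x ^ n)
      (∑' s : (Σ n : ℕ, {p // p ∈ Tlev n}), Fw x (ι s)) :=
    HasSum.sigma hsig.hasSum (fun n => fiber_hasSum x n)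
  have hF : HasSum (Fw x) (∑' s : (Σ n : ℕ, {p // p ∈ Tlev n}), Fw x (ι s)) :=
    (hinj.hasSum_iff hrange).1 hsig.hasSum
  -- group by the first coordinate
  set g : ℕ → ℝ := fun k => ∑ i ∈ Finset.Icc 1 k, Fw x (k, i) with hgdef
  have hrow : ∀ k, HasSum (fun i => Fw x (k, i)) (g k) := by
    intro k
    apply hasSum_sum_of_ne_finset_zero
    intro i hi
    rw [Finset.mem_Icc] at hi
    rw [Fw, if_neg]
    rintro ⟨h1, h2, -⟩
    exact hi ⟨h1, by omega⟩
  have hgsum : HasSum g (∑' s : (Σ n : ℕ, {p // p ∈ Tlev n}), Fw x (ι s)) :=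
    HasSum.prod_fiberwise hF hrow
  have hg0 : g 0 = 0 := by simp [hgdef]
  have hg1 : g 1 = 0 := by
    rw [hgdef]
    simp only [Finset.Icc_self, Finset.sum_singleton, Fw]
    norm_num
  have hgk : ∀ k : ℕ, g (k + 2) = ((k + 2 : ℕ) : ℝ) * Agen (k + 2) x := by
    intro k
    rw [hgdef, Agen, Finset.mul_sum]
    apply Finset.sum_congr rfl
    intro i hi
    rw [Finset.mem_Icc] at hi
    rw [mul_ite, mul_zero]
    by_cases hik : i < k + 2
    · rw [Fw]
      by_cases hgcd : Nat.gcd i (k + 2) = 1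
      · rw [if_pos ⟨hi.1, hik, hgcd⟩, if_pos hgcd]
      · rw [if_neg (by rintro ⟨-, -, hc⟩; exact hgcd hc), if_neg hgcd]
    · have hik2 : i = k + 2 := by omega
      subst hik2
      have hgc : Nat.gcd (k + 2) (k + 2) = k + 2 := Nat.gcd_self _
      rw [Fw, if_neg (by rintro ⟨-, hc, -⟩; omega), if_neg (by omega)]
  -- assemble
  have hsummg : Summable g := hgsum.summable
  have hsummg1 : Summable fun k => g (k + 1) := (summable_nat_add_iff 1).2 hsummg
  have t1 := Summable.tsum_eq_zero_add hsummg
  have t2 := Summable.tsum_eq_zero_add hsummg1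
  rw [hg0, zero_add] at t1
  rw [hg1, zero_add] at t2
  have e2 : ∑' k : ℕ, ((k + 2 : ℕ) : ℝ) * Agen (k + 2) x
      = ∑' s : (Σ n : ℕ, {p // p ∈ Tlev n}), Fw x (ι s) := by
    rw [tsum_congr fun k => (hgk k).symm]
    rw [show (fun k : ℕ => g (k + 2)) = fun k : ℕ => g (k + 1 + 1) from rfl] at *
    rw [← t2, ← t1, hgsum.tsum_eq]
  -- compute the geometric series
  have hsummL : Summable fun n : ℕ => (Lsum n : ℝ) * x ^ n := hsum_rows.summable
  have t := Summable.tsum_eq_zero_add hsummL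
  have hL0 : ((Lsum 0 : ℕ) : ℝ) = 0 := by simp [Lsum, Tlev_zero]
  rw [hL0, zero_mul, zero_add] at t
  have e4 : ∑' n : ℕ, ((Lsum (n + 1) : ℕ) : ℝ) * x ^ (n + 1)
      = ∑' n : ℕ, (2 * x) * (3 * x) ^ n := by
    apply tsum_congr
    intro n
    rw [(LS_closed n).1]
    push_cast
    ring
  rw [e4, tsum_mul_left, tsum_geometric_of_norm_lt_one h3x] at t
  rw [e2, ← hsum_rows.tsum_eq, t, div_eq_mul_inv]
end

section
/- Let μ be the (m,d)-measure with probabilities {p_i}_{i=0}^{m−1}, 2 ≤ d < m ≤ 2d−1. If the limit 𝕳_μ = lim_{n→∞} h_μ(n)/(n log₂ d) exists, then (log₂ d)·𝕳_μ lies in the interval [−Σ_{i=0}^{m−1} p_i log₂ p_i − Σ_{i=0}^{m−d−1}(p_i + p_{d+i}), −Σ_{i=0}^{m−1} p_i log₂ p_i]. -/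
open Real Finset
open scoped Classical

lemma doubleton_log {a b : ℝ} (ha : 0 < a) (hb : 0 < b) :
    (a + b) * Real.logb 2 (a + b) - (a + b) ≤ a * Real.logb 2 a + b * Real.logb 2 b := by
  have hs : 0 < a + b := by linarith
  have h2 : (0:ℝ) < Real.log 2 := Real.log_pos (by norm_num)
  have hbe := Real.binEntropy_le_log_two (p := a / (a+b))
  rw [Real.binEntropy] at hbe
  have ht1 : 1 - a/(a+b) = b / (a + b) := by field_simp; ring
  rw [ht1] at hbe
  have hlog1 : Real.log (a / (a+b))⁻¹ = Real.log (a+b) - Real.log a := by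
    rw [Real.log_inv, Real.log_div ha.ne' hs.ne']; ring
  have hlog2 : Real.log (b / (a+b))⁻¹ = Real.log (a+b) - Real.log b := by
    rw [Real.log_inv, Real.log_div hb.ne' hs.ne']; ring
  rw [hlog1, hlog2] at hbe
  have key : (a+b) * Real.log (a+b) - (a+b) * Real.log 2
      ≤ a * Real.log a + b * Real.log b := by
    have h3 := mul_le_mul_of_nonneg_left hbe hs.le
    have e1 : (a+b) * (a/(a+b) * (Real.log (a+b) - Real.log a) +
        (b/(a+b)) * (Real.log (a+b) - Real.log b))
        = a * (Real.log (a+b) - Real.log a) + b * (Real.log (a+b) - Real.log b) := by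
      field_simp
    rw [e1] at h3
    nlinarith [h3]
  have efin : (a+b) * Real.logb 2 (a+b) - (a+b)
      = ((a+b) * Real.log (a+b) - (a+b) * Real.log 2) / Real.log 2 := by
    rw [Real.logb]; field_simp
  rw [efin, Real.logb, Real.logb]
  calc ((a+b) * Real.log (a+b) - (a+b) * Real.log 2) / Real.log 2
      ≤ (a * Real.log a + b * Real.log b) / Real.log 2 := by gcongr
    _ = a * (Real.log a / Real.log 2) + b * (Real.log b / Real.log 2) := by ring

section Generic
variable {Ω : Type*} [Fintype Ω] (F : Ω → ℝ) (v : Ω → ℝ)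

lemma entropy_push_le (hv : ∀ ω, 0 < v ω) :
    -∑ z ∈ image F univ,
        (∑ ω ∈ univ.filter (fun ω => F ω = z), v ω) *
          Real.logb 2 (∑ ω ∈ univ.filter (fun ω => F ω = z), v ω)
      ≤ -∑ ω, v ω * Real.logb 2 (v ω) := by
  rw [neg_le_neg_iff]
  rw [← Finset.sum_fiberwise_of_maps_to (fun ω _ => Finset.mem_image_of_mem F (mem_univ ω))
    (fun ω => v ω * Real.logb 2 (v ω))]
  apply Finset.sum_le_sum
  intro z hz
  set s := univ.filter (fun ω => F ω = z) with hs
  have hW : ∀ ω ∈ s, v ω ≤ ∑ ω ∈ s, v ω := fun ω hω =>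
    Finset.single_le_sum (fun i _ => (hv i).le) hω
  obtain ⟨ω₀, hω₀⟩ : s.Nonempty := by
    obtain ⟨ω, -, rfl⟩ := Finset.mem_image.mp hz
    exact ⟨ω, by simp [hs]⟩
  have hWpos : 0 < ∑ ω ∈ s, v ω := lt_of_lt_of_le (hv ω₀) (hW ω₀ hω₀)
  calc ∑ ω ∈ s, v ω * Real.logb 2 (v ω)
      ≤ ∑ ω ∈ s, v ω * Real.logb 2 (∑ ω ∈ s, v ω) := by
        apply Finset.sum_le_sum
        intro ω hω
        exact mul_le_mul_of_nonneg_left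
          ((Real.logb_le_logb (by norm_num) (hv ω) hWpos).mpr (hW ω hω)) (hv ω).le
    _ = (∑ ω ∈ s, v ω) * Real.logb 2 (∑ ω ∈ s, v ω) := by rw [Finset.sum_mul]

lemma entropy_push_ge (hv : ∀ ω, 0 < v ω)
    (hcard : ∀ z : ℝ, (univ.filter (fun ω => F ω = z)).card ≤ 2)
    (B : Finset Ω) (hB : ∀ ω₁ ω₂, F ω₁ = F ω₂ → ω₁ ≠ ω₂ → ω₁ ∈ B) :
    (-∑ ω, v ω * Real.logb 2 (v ω)) - ∑ ω ∈ B, v ω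
      ≤ -∑ z ∈ image F univ,
        (∑ ω ∈ univ.filter (fun ω => F ω = z), v ω) *
          Real.logb 2 (∑ ω ∈ univ.filter (fun ω => F ω = z), v ω) := by
  have main : ∑ z ∈ image F univ,
      (∑ ω ∈ univ.filter (fun ω => F ω = z), v ω) *
        Real.logb 2 (∑ ω ∈ univ.filter (fun ω => F ω = z), v ω)
      ≤ ∑ ω, (v ω * Real.logb 2 (v ω) + if ω ∈ B then v ω else 0) := by
    rw [← Finset.sum_fiberwise_of_maps_to (fun ω _ => Finset.mem_image_of_mem F (mem_univ ω))
      (fun ω => v ω * Real.logb 2 (v ω) + if ω ∈ B then v ω else 0)]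
    apply Finset.sum_le_sum
    intro z hz
    set s := univ.filter (fun ω => F ω = z) with hs
    have hne : s.Nonempty := by
      obtain ⟨ω, -, rfl⟩ := Finset.mem_image.mp hz
      exact ⟨ω, by simp [hs]⟩
    have h1 : 1 ≤ s.card := hne.card_pos
    have h2 : s.card ≤ 2 := hcard z
    interval_cases h : s.card
    · obtain ⟨a, heq⟩ := Finset.card_eq_one.mp h
      rw [heq]
      simp only [Finset.sum_singleton]
      have : (0:ℝ) ≤ if a ∈ B then v a else 0 := by
        by_cases hb : a ∈ B <;> simp [hb, (hv a).le]
      linarith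
    · obtain ⟨x, y, hxy, heq⟩ := Finset.card_eq_two.mp h
      have hx : x ∈ s := by rw [heq]; simp
      have hy : y ∈ s := by rw [heq]; simp
      rw [hs] at hx hy
      rw [heq]
      have hFxy : F x = F y := by
        rw [(Finset.mem_filter.mp hx).2, (Finset.mem_filter.mp hy).2]
      have hxB : x ∈ B := hB x y hFxy hxy
      have hyB : y ∈ B := hB y x hFxy.symm hxy.symm
      rw [Finset.sum_pair hxy, Finset.sum_pair hxy, if_pos hxB, if_pos hyB]
      have := doubleton_log (hv x) (hv y)
      linarith
  have hsplit : ∑ ω, (v ω * Real.logb 2 (v ω) + if ω ∈ B then v ω else 0)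
      = (∑ ω, v ω * Real.logb 2 (v ω)) + ∑ ω ∈ B, v ω := by
    rw [Finset.sum_add_distrib, Finset.sum_ite_mem, Finset.univ_inter]
  rw [hsplit] at main
  linarith

end Generic


noncomputable def Sword (m d : ℕ) {n : ℕ} (σ : Fin n → Fin m) : ℝ :=
  (List.ofFn σ).foldr (fun j x => Smap m d (j : ℕ) x) 0

noncomputable def freq (m d n : ℕ) (z : ℝ) : ℕ :=
  Nat.card {σ : Fin n → Fin m // Sword m d σ = z}

noncomputable def fcount (m d n k : ℕ) : ℕ :=
  Nat.card {z : ℝ // (∃ σ : Fin n → Fin m, Sword m d σ = z) ∧ freq m d n z = k}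

section SwordLemmas
variable {m d : ℕ}

lemma foldr_affine (hd : 2 ≤ d) (l : List ℕ) (x : ℝ) :
    l.foldr (fun j y => Smap m d j y) x
      = l.foldr (fun j y => Smap m d j y) 0 + x / (d:ℝ) ^ l.length := by
  induction l with
  | nil => simp
  | cons a l ih =>
    rw [List.foldr_cons, List.foldr_cons, ih, List.length_cons]
    show Smap m d a (_ + x / (d:ℝ) ^ l.length) = _
    rw [Smap, Smap, add_div, div_div, ← pow_succ]
    ring

lemma sword_eq {n : ℕ} (σ : Fin n → Fin m) :
    Sword m d σ = (List.ofFn fun i => ((σ i : ℕ))).foldr (fun j x => Smap m d j x) 0 := by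
  rw [Sword]
  congr 1
  change (List.ofFn σ).flatMap (pure ∘ fun a : Fin m => (a:ℕ)) = _
  rw [List.flatMap_pure_eq_map, List.map_ofFn]
  rfl

lemma sword_cons {n : ℕ} (j : Fin m) (τ : Fin n → Fin m) :
    Sword m d (Fin.cons j τ) = Smap m d (j : ℕ) (Sword m d τ) := by
  rw [sword_eq, sword_eq]
  rw [List.ofFn_succ]
  simp only [Fin.cons_zero, Fin.cons_succ, List.foldr_cons]

lemma sword_snoc (hd : 2 ≤ d) {n : ℕ} (τ : Fin n → Fin m) (j : Fin m) :
    Sword m d (Fin.snoc τ j)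
      = Sword m d τ + (j : ℝ) * (((d:ℝ) - 1) / ((m:ℝ) - 1)) / (d:ℝ) ^ (n+1) := by
  rw [sword_eq, sword_eq]
  have h0 : (List.ofFn fun i : Fin (n+1) => (((Fin.snoc τ j : Fin (n+1) → Fin m)) i : ℕ))
      = (List.ofFn fun i : Fin n => ((τ i : ℕ))) ++ [(j : ℕ)] := by
    rw [List.ofFn_succ']
    simp [Fin.snoc_castSucc, Fin.snoc_last]
  rw [h0, List.foldr_append]
  rw [foldr_affine hd (List.ofFn fun i => ((τ i : ℕ))) _]
  simp only [List.foldr_cons, List.foldr_nil, List.length_ofFn, Smap]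
  rw [zero_div, zero_add]
  ring

lemma exists_N (hd : 2 ≤ d) (hdm : d < m) (hm : m ≤ 2 * d - 1) {n : ℕ}
    (σ : Fin n → Fin m) :
    ∃ N : ℕ, Sword m d σ = (((d:ℝ) - 1) / ((m:ℝ) - 1)) * N / (d:ℝ) ^ n
      ∧ N + 2 ≤ 2 * d ^ n := by
  have hd0 : (d:ℝ) ≠ 0 := by
    have : (0:ℝ) < d := by exact_mod_cast Nat.lt_of_lt_of_le (by norm_num) hd
    exact this.ne'
  induction n with
  | zero =>
    refine ⟨0, ?_, by norm_num⟩
    have : List.ofFn σ = [] := by simp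
    simp [Sword, this]
  | succ n ih =>
    obtain ⟨N, hN, hNb⟩ := ih (Fin.tail σ)
    have hσ : σ = Fin.cons (σ 0) (Fin.tail σ) := (Fin.cons_self_tail σ).symm
    refine ⟨(σ 0 : ℕ) * d ^ n + N, ?_, ?_⟩
    · rw [hσ, sword_cons, ← hσ, Smap, hN]
      push_cast
      generalize ((d:ℝ) - 1) / ((m:ℝ) - 1) = C
      field_simp
      ring
    · have hj : (σ 0 : ℕ) + 2 ≤ 2 * d := by
        have := (σ 0).isLt
        omega
      have h1 : (σ 0 : ℕ) * d ^ n ≤ (2 * d - 2) * d ^ n :=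
        Nat.mul_le_mul_right _ (by omega)
      have h2 : (2 * d - 2) * d ^ n + 2 * d ^ n = 2 * d ^ (n+1) := by
        have e : (2 * d - 2) + 2 = 2 * d := by omega
        rw [pow_succ]
        calc (2 * d - 2) * d ^ n + 2 * d ^ n = ((2*d-2) + 2) * d ^ n := by ring
          _ = 2 * d * d ^ n := by rw [e]
          _ = 2 * (d ^ n * d) := by ring
      have hdn : 1 ≤ d ^ n := Nat.one_le_pow _ _ (by omega)
      omega

lemma N_unique (hd : 2 ≤ d) (hdm : d < m) {n : ℕ} {N N' : ℕ}
    (h : (((d:ℝ) - 1) / ((m:ℝ) - 1)) * N / (d:ℝ) ^ n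
       = (((d:ℝ) - 1) / ((m:ℝ) - 1)) * N' / (d:ℝ) ^ n) : N = N' := by
  have hd0 : (0:ℝ) < d := by exact_mod_cast Nat.lt_of_lt_of_le (by norm_num) hd
  have hc : (0:ℝ) < ((d:ℝ) - 1) / ((m:ℝ) - 1) := by
    apply div_pos
    · have : (2:ℝ) ≤ d := by exact_mod_cast hd
      linarith
    · have : (2:ℝ) < m := by
        have : 2 < m := lt_of_le_of_lt hd hdm
        exact_mod_cast this
      linarith
  have hdn : (0:ℝ) < (d:ℝ) ^ n := by positivity
  have hm1 : (m:ℝ) - 1 ≠ 0 := by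
    have : (2:ℝ) < m := by exact_mod_cast lt_of_le_of_lt hd hdm
    linarith
  have hd1 : (d:ℝ) - 1 ≠ 0 := by
    have : (2:ℝ) ≤ d := by exact_mod_cast hd
    linarith
  have e : ∀ K : ℝ, (((d:ℝ) - 1) / ((m:ℝ) - 1)) * K / (d:ℝ) ^ n
      * ((d:ℝ) ^ n / (((d:ℝ) - 1) / ((m:ℝ) - 1))) = K := by
    intro K
    field_simp
  have h2 := congrArg (fun x : ℝ => x * ((d:ℝ) ^ n / (((d:ℝ) - 1) / ((m:ℝ) - 1)))) h
  simp only [e] at h2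
  exact_mod_cast h2

end SwordLemmas

noncomputable def wt (m d : ℕ) (p : ℕ → ℝ) (n : ℕ) (z : ℝ) : ℝ :=
  ∑ᶠ σ ∈ {σ : Fin n → Fin m | Sword m d σ = z}, ∏ i, p ((σ i : ℕ))

noncomputable def hlevel (m d : ℕ) (p : ℕ → ℝ) (n : ℕ) : ℝ :=
  -∑ᶠ z ∈ Set.range (fun σ : Fin n → Fin m => Sword m d σ),
      wt m d p n z * Real.logb 2 (wt m d p n z)

section Weights
variable (m d : ℕ) (p : ℕ → ℝ)

noncomputable def Zn (n : ℕ) : Finset ℝ :=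
  image (fun σ : Fin n → Fin m => Sword m d σ) univ

noncomputable def Wn (n : ℕ) (z : ℝ) : ℝ :=
  ∑ σ ∈ univ.filter (fun σ : Fin n → Fin m => Sword m d σ = z), ∏ i, p ((σ i : ℕ))

variable {m d p}

lemma wt_eq (n : ℕ) (z : ℝ) : wt m d p n z = Wn m d p n z := by
  have hset : {σ : Fin n → Fin m | Sword m d σ = z}
      = ↑(univ.filter fun σ : Fin n → Fin m => Sword m d σ = z) := by
    ext σ; simp
  rw [wt, hset, finsum_mem_coe_finset]
  rfl

lemma hlevel_eq (n : ℕ) :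
    hlevel m d p n = -∑ z ∈ Zn m d n, Wn m d p n z * Real.logb 2 (Wn m d p n z) := by
  have hset : Set.range (fun σ : Fin n → Fin m => Sword m d σ) = ↑(Zn m d n) := by
    rw [Zn, Finset.coe_image, Finset.coe_univ, Set.image_univ]
  rw [hlevel, hset, finsum_mem_coe_finset]
  congr 1
  exact Finset.sum_congr rfl fun z _ => by rw [wt_eq]

lemma prod_pos (hp : ∀ i < m, 0 < p i) {n : ℕ} (σ : Fin n → Fin m) :
    0 < ∏ i, p ((σ i : ℕ)) :=
  Finset.prod_pos fun i _ => hp _ (σ i).isLt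

lemma mass (hp1 : ∑ i ∈ Finset.range m, p i = 1) (n : ℕ) :
    ∑ σ : Fin n → Fin m, ∏ i, p ((σ i : ℕ)) = 1 := by
  induction n with
  | zero => simp
  | succ n ih =>
    rw [← Equiv.sum_comp (Fin.snocEquiv (fun _ => Fin m))
      (fun σ : Fin (n+1) → Fin m => ∏ i, p ((σ i : ℕ))), Fintype.sum_prod_type]
    have step : ∀ (j : Fin m) (τ : Fin n → Fin m),
        (∏ i, p (((Fin.snocEquiv (fun _ => Fin m) (j, τ)) i : ℕ)))
          = (∏ i, p ((τ i : ℕ))) * p (j : ℕ) := by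
      intro j τ
      show (∏ i, p (((Fin.snoc τ j : Fin (n+1) → Fin m) i : ℕ))) = _
      rw [Fin.prod_univ_castSucc]
      congr 1
      · exact Finset.prod_congr rfl fun i _ => by rw [Fin.snoc_castSucc]
      · rw [Fin.snoc_last]
    calc ∑ j : Fin m, ∑ τ : Fin n → Fin m,
          (∏ i, p (((Fin.snocEquiv (fun _ => Fin m) (j, τ)) i : ℕ)))
        = ∑ j : Fin m, ∑ τ : Fin n → Fin m, (∏ i, p ((τ i : ℕ))) * p (j : ℕ) := by
          exact Finset.sum_congr rfl fun j _ => Finset.sum_congr rfl fun τ _ => step j τ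
      _ = ∑ j : Fin m, (∑ τ : Fin n → Fin m, ∏ i, p ((τ i : ℕ))) * p (j : ℕ) := by
          exact Finset.sum_congr rfl fun j _ => by rw [Finset.sum_mul]
      _ = ∑ j : Fin m, p (j : ℕ) := by rw [ih]; simp
      _ = 1 := by rw [Fin.sum_univ_eq_sum_range]; exact hp1

lemma sum_Wn (hp1 : ∑ i ∈ Finset.range m, p i = 1) (n : ℕ) :
    ∑ z ∈ Zn m d n, Wn m d p n z = 1 := by
  rw [Zn]
  simp only [Wn]
  have h := Finset.sum_fiberwise_of_maps_to (s := (univ : Finset (Fin n → Fin m)))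
    (t := image (fun σ : Fin n → Fin m => Sword m d σ) univ)
    (g := fun σ : Fin n → Fin m => Sword m d σ)
    (fun σ _ => Finset.mem_image_of_mem _ (mem_univ σ)) (fun σ => ∏ i, p ((σ i : ℕ)))
  exact h.trans (mass hp1 n)

lemma Wn_pos (hp : ∀ i < m, 0 < p i) {n : ℕ} {z : ℝ} (hz : z ∈ Zn m d n) :
    0 < Wn m d p n z := by
  obtain ⟨σ, -, rfl⟩ := Finset.mem_image.mp hz
  apply Finset.sum_pos (fun τ _ => prod_pos hp τ)
  exact ⟨σ, by simp⟩

end Weights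

section Recursion
variable {m d : ℕ} {p : ℕ → ℝ}

-- product over snoc
lemma prod_snoc (p : ℕ → ℝ) {n : ℕ} (τ : Fin n → Fin m) (j : Fin m) :
    (∏ i, p (((Fin.snoc τ j : Fin (n+1) → Fin m) i : ℕ)))
      = (∏ i, p ((τ i : ℕ))) * p (j : ℕ) := by
  rw [Fin.prod_univ_castSucc]
  congr 1
  · exact Finset.prod_congr rfl fun i _ => by rw [Fin.snoc_castSucc]
  · rw [Fin.snoc_last]

variable (m d p) in
noncomputable def Fmap (n : ℕ) (ω : {z : ℝ // z ∈ Zn m d n} × Fin m) : ℝ :=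
  ω.1.1 + (ω.2 : ℝ) * (((d:ℝ) - 1) / ((m:ℝ) - 1)) / (d:ℝ) ^ (n+1)

variable (m d p) in
noncomputable def vmap (n : ℕ) (ω : {z : ℝ // z ∈ Zn m d n} × Fin m) : ℝ :=
  Wn m d p n ω.1.1 * p ((ω.2 : ℕ))

lemma vmap_pos (hp : ∀ i < m, 0 < p i) {n : ℕ} (ω : {z : ℝ // z ∈ Zn m d n} × Fin m) :
    0 < vmap m d p n ω :=
  mul_pos (Wn_pos hp ω.1.2) (hp _ ω.2.isLt)

lemma fiber_sum (hd : 2 ≤ d) (n : ℕ) (y : ℝ) :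
    (∑ ω ∈ univ.filter (fun ω : {z : ℝ // z ∈ Zn m d n} × Fin m => Fmap m d n ω = y),
      vmap m d p n ω) = Wn m d p (n+1) y := by
  rw [Finset.sum_filter, Wn, Finset.sum_filter]
  rw [← Equiv.sum_comp (Fin.snocEquiv (fun _ => Fin m))
    (fun σ : Fin (n+1) → Fin m => if Sword m d σ = y then ∏ i, p ((σ i : ℕ)) else 0)]
  rw [Fintype.sum_prod_type, Fintype.sum_prod_type]
  have rhs : ∀ j : Fin m, ∀ τ : Fin n → Fin m,
      (if Sword m d ((Fin.snocEquiv (fun _ => Fin m)) (j, τ)) = y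
        then ∏ i, p ((((Fin.snocEquiv (fun _ => Fin m)) (j, τ)) i : ℕ)) else 0)
      = (if Sword m d τ + (j : ℝ) * (((d:ℝ) - 1) / ((m:ℝ) - 1)) / (d:ℝ) ^ (n+1) = y
        then (∏ i, p ((τ i : ℕ))) * p (j : ℕ) else 0) := by
    intro j τ
    show (if Sword m d (Fin.snoc τ j) = y
        then ∏ i, p (((Fin.snoc τ j : Fin (n+1) → Fin m) i : ℕ)) else 0) = _
    rw [sword_snoc hd, prod_snoc]
  rw [Finset.sum_congr rfl fun j _ => Finset.sum_congr rfl fun τ _ => rhs j τ]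
  -- now group τ by Sword
  have inner : ∀ j : Fin m,
      (∑ τ : Fin n → Fin m,
        if Sword m d τ + (j : ℝ) * (((d:ℝ) - 1) / ((m:ℝ) - 1)) / (d:ℝ) ^ (n+1) = y
        then (∏ i, p ((τ i : ℕ))) * p (j : ℕ) else 0)
      = ∑ z ∈ Zn m d n,
        (if z + (j : ℝ) * (((d:ℝ) - 1) / ((m:ℝ) - 1)) / (d:ℝ) ^ (n+1) = y
        then Wn m d p n z * p (j : ℕ) else 0) := by
    intro j
    have h := Finset.sum_fiberwise_of_maps_to (s := (univ : Finset (Fin n → Fin m)))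
      (t := Zn m d n) (g := fun τ : Fin n → Fin m => Sword m d τ)
      (fun τ _ => Finset.mem_image_of_mem _ (mem_univ τ))
      (fun τ => if Sword m d τ + (j : ℝ) * (((d:ℝ) - 1) / ((m:ℝ) - 1)) / (d:ℝ) ^ (n+1) = y
        then (∏ i, p ((τ i : ℕ))) * p (j : ℕ) else 0)
    rw [← h]
    refine Finset.sum_congr rfl fun z _ => ?_
    have e1 : ∀ τ ∈ univ.filter (fun τ : Fin n → Fin m => Sword m d τ = z),
        (if Sword m d τ + (j : ℝ) * (((d:ℝ) - 1) / ((m:ℝ) - 1)) / (d:ℝ) ^ (n+1) = y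
          then (∏ i, p ((τ i : ℕ))) * p (j : ℕ) else 0)
        = (if z + (j : ℝ) * (((d:ℝ) - 1) / ((m:ℝ) - 1)) / (d:ℝ) ^ (n+1) = y
          then (∏ i, p ((τ i : ℕ))) * p (j : ℕ) else 0) := by
      intro τ hτ
      rw [(Finset.mem_filter.mp hτ).2]
    rw [Finset.sum_congr rfl e1]
    by_cases hc : z + (j : ℝ) * (((d:ℝ) - 1) / ((m:ℝ) - 1)) / (d:ℝ) ^ (n+1) = y
    · simp only [if_pos hc, Wn, Finset.sum_mul]
    · simp only [if_neg hc, Finset.sum_const_zero]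
  rw [Finset.sum_congr rfl fun j _ => inner j]
  rw [Finset.sum_comm]
  refine Finset.sum_congr rfl fun j _ => ?_
  rw [← Finset.sum_coe_sort (Zn m d n)
    (fun z => if z + (j : ℝ) * (((d:ℝ) - 1) / ((m:ℝ) - 1)) / (d:ℝ) ^ (n+1) = y
      then Wn m d p n z * p (j : ℕ) else 0)]
  rfl

lemma image_Fmap (hd : 2 ≤ d) (n : ℕ) :
    image (Fmap m d n) univ = Zn m d (n+1) := by
  ext y
  rw [Finset.mem_image]
  show _ ↔ y ∈ image (fun σ : Fin (n+1) → Fin m => Sword m d σ) univ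
  rw [Finset.mem_image]
  simp only [Finset.mem_univ, true_and]
  constructor
  · rintro ⟨⟨⟨z, hz⟩, j⟩, rfl⟩
    obtain ⟨τ, -, rfl⟩ := Finset.mem_image.mp hz
    exact ⟨Fin.snoc τ j, by rw [sword_snoc hd]; rfl⟩
  · rintro ⟨σ, rfl⟩
    have hz : Sword m d (Fin.init σ) ∈ Zn m d n :=
      Finset.mem_image_of_mem _ (mem_univ _)
    refine ⟨⟨⟨Sword m d (Fin.init σ), hz⟩, σ (Fin.last n)⟩, ?_⟩
    show Sword m d (Fin.init σ) + _ = _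
    rw [← sword_snoc hd (Fin.init σ) (σ (Fin.last n)), Fin.snoc_init_self]

lemma getN (hd : 2 ≤ d) (hdm : d < m) (hm : m ≤ 2 * d - 1) {n : ℕ} {z : ℝ}
    (hz : z ∈ Zn m d n) :
    ∃ N : ℕ, z = (((d:ℝ) - 1) / ((m:ℝ) - 1)) * N / (d:ℝ) ^ n ∧ N + 2 ≤ 2 * d ^ n := by
  obtain ⟨σ, -, rfl⟩ := Finset.mem_image.mp hz
  exact exists_N hd hdm hm σ

lemma collision (hd : 2 ≤ d) (hdm : d < m) (hm : m ≤ 2 * d - 1) {n : ℕ}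
    {ω₁ ω₂ : {z : ℝ // z ∈ Zn m d n} × Fin m}
    (hF : Fmap m d n ω₁ = Fmap m d n ω₂) (hne : ω₁ ≠ ω₂) :
    (ω₁.2 : ℕ) + d ≤ (ω₂.2 : ℕ) ∨ (ω₂.2 : ℕ) + d ≤ (ω₁.2 : ℕ) := by
  obtain ⟨⟨z₁, hz₁⟩, j₁⟩ := ω₁
  obtain ⟨⟨z₂, hz₂⟩, j₂⟩ := ω₂
  obtain ⟨N₁, hN₁, hb₁⟩ := getN hd hdm hm hz₁
  obtain ⟨N₂, hN₂, hb₂⟩ := getN hd hdm hm hz₂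
  have hd0 : (d:ℝ) ≠ 0 := by
    have : (0:ℝ) < d := by exact_mod_cast Nat.lt_of_lt_of_le (by norm_num) hd
    exact this.ne'
  have key : d * N₁ + (j₁ : ℕ) = d * N₂ + (j₂ : ℕ) := by
    apply N_unique hd hdm (n := n + 1)
    have e : ∀ (N : ℕ) (j : Fin m),
        (((d:ℝ) - 1) / ((m:ℝ) - 1)) * ((d * N + (j:ℕ) : ℕ) : ℝ) / (d:ℝ) ^ (n+1)
        = (((d:ℝ) - 1) / ((m:ℝ) - 1)) * N / (d:ℝ) ^ n
          + (j : ℝ) * (((d:ℝ) - 1) / ((m:ℝ) - 1)) / (d:ℝ) ^ (n+1) := by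
      intro N j
      push_cast
      generalize ((d:ℝ) - 1) / ((m:ℝ) - 1) = C
      field_simp
      ring
    rw [e N₁ j₁, e N₂ j₂, ← hN₁, ← hN₂]
    exact hF
  show (j₁ : ℕ) + d ≤ (j₂ : ℕ) ∨ (j₂ : ℕ) + d ≤ (j₁ : ℕ)
  by_cases hj : (j₁ : ℕ) = (j₂ : ℕ)
  · exfalso
    have hN : N₁ = N₂ := by
      have hj' : (j₁ : ℕ) = (j₂ : ℕ) := hj
      rw [hj'] at key
      have := Nat.add_right_cancel key
      exact Nat.eq_of_mul_eq_mul_left (by omega) this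
    have hzz : z₁ = z₂ := by rw [hN₁, hN₂, hN]
    exact hne (Prod.ext_iff.mpr ⟨Subtype.ext hzz, Fin.ext hj⟩)
  · rcases lt_trichotomy N₁ N₂ with h | h | h
    · right
      have hmul : d * N₁ + d ≤ d * N₂ := by
        have := Nat.mul_le_mul_left d (Nat.succ_le_of_lt h)
        rw [Nat.mul_succ] at this
        exact this
      have h2 : d * N₁ + (d + (j₂:ℕ)) ≤ d * N₁ + (j₁:ℕ) := by
        rw [← Nat.add_assoc]
        calc d * N₁ + d + (j₂:ℕ) ≤ d * N₂ + (j₂:ℕ) := Nat.add_le_add_right hmul _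
          _ = d * N₁ + (j₁:ℕ) := key.symm
      have h3 := Nat.le_of_add_le_add_left h2
      omega
    · exfalso
      subst h
      exact hj (Nat.add_left_cancel key)
    · left
      have hmul : d * N₂ + d ≤ d * N₁ := by
        have := Nat.mul_le_mul_left d (Nat.succ_le_of_lt h)
        rw [Nat.mul_succ] at this
        exact this
      have h2 : d * N₂ + (d + (j₁:ℕ)) ≤ d * N₂ + (j₂:ℕ) := by
        rw [← Nat.add_assoc]
        calc d * N₂ + d + (j₁:ℕ) ≤ d * N₁ + (j₁:ℕ) := Nat.add_le_add_right hmul _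
          _ = d * N₂ + (j₂:ℕ) := key
      have h3 := Nat.le_of_add_le_add_left h2
      omega

lemma fiber_card (hd : 2 ≤ d) (hdm : d < m) (hm : m ≤ 2 * d - 1) (n : ℕ) (y : ℝ) :
    (univ.filter (fun ω : {z : ℝ // z ∈ Zn m d n} × Fin m => Fmap m d n ω = y)).card
      ≤ 2 := by
  have inj : Set.InjOn (fun ω : {z : ℝ // z ∈ Zn m d n} × Fin m => decide (d ≤ (ω.2 : ℕ)))
      ↑(univ.filter (fun ω : {z : ℝ // z ∈ Zn m d n} × Fin m => Fmap m d n ω = y)) := ?_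
  · have h := Finset.card_le_card_of_injOn
      (s := univ.filter (fun ω : {z : ℝ // z ∈ Zn m d n} × Fin m => Fmap m d n ω = y))
      (t := (univ : Finset Bool))
      (fun ω : {z : ℝ // z ∈ Zn m d n} × Fin m => decide (d ≤ (ω.2 : ℕ)))
      (fun _ _ => mem_univ _) inj
    simpa using h
  · intro ω₁ h₁ ω₂ h₂ heq
    by_contra hne
    have hF : Fmap m d n ω₁ = Fmap m d n ω₂ := by
      rw [(Finset.mem_filter.mp (Finset.mem_coe.mp h₁)).2,
        (Finset.mem_filter.mp (Finset.mem_coe.mp h₂)).2]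
    have hj₁ := ω₁.2.isLt
    have hj₂ := ω₂.2.isLt
    rcases collision hd hdm hm hF hne with h | h
    · have b1 : ¬ (d ≤ (ω₁.2 : ℕ)) := by omega
      have b2 : d ≤ (ω₂.2 : ℕ) := by omega
      simp [b1, b2] at heq
    · have b1 : d ≤ (ω₁.2 : ℕ) := by omega
      have b2 : ¬ (d ≤ (ω₂.2 : ℕ)) := by omega
      simp [b1, b2] at heq

lemma bad_mass (hd : 2 ≤ d) (hdm : d < m) (hm : m ≤ 2 * d - 1)
    (hp1 : ∑ i ∈ Finset.range m, p i = 1) (n : ℕ) :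
    ∑ ω ∈ univ.filter
        (fun ω : {z : ℝ // z ∈ Zn m d n} × Fin m => (ω.2 : ℕ) + d < m ∨ d ≤ (ω.2 : ℕ)),
      vmap m d p n ω
    = ∑ i ∈ Finset.range (m - d), (p i + p (d + i)) := by
  rw [Finset.sum_filter, Fintype.sum_prod_type]
  have inner : ∀ z : {z : ℝ // z ∈ Zn m d n},
      (∑ j : Fin m, if (j : ℕ) + d < m ∨ d ≤ (j : ℕ) then vmap m d p n (z, j) else 0)
      = Wn m d p n z.1 * ∑ j : Fin m, (if (j : ℕ) + d < m ∨ d ≤ (j : ℕ) then p (j : ℕ) else 0) := by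
    intro z
    rw [Finset.mul_sum]
    refine Finset.sum_congr rfl fun j _ => ?_
    by_cases hc : (j : ℕ) + d < m ∨ d ≤ (j : ℕ) <;> simp [hc, vmap]
  rw [Finset.sum_congr rfl fun z _ => inner z, ← Finset.sum_mul]
  have hW1 : (∑ z : {z : ℝ // z ∈ Zn m d n}, Wn m d p n z.1) = 1 := by
    rw [Finset.sum_coe_sort (Zn m d n) (fun z => Wn m d p n z)]
    exact sum_Wn hp1 n
  rw [hW1, one_mul]
  rw [Fin.sum_univ_eq_sum_range (fun j => if j + d < m ∨ d ≤ j then p j else 0) m]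
  have hmd : m - d ≤ d := by omega
  have hdm' : d ≤ m := le_of_lt hdm
  have e1 : Finset.range m = Finset.Ico 0 m := by rw [Finset.range_eq_Ico]
  rw [e1, ← Finset.sum_Ico_consecutive _ (Nat.zero_le (m - d)) (le_trans hmd hdm'),
    ← Finset.sum_Ico_consecutive _ hmd hdm']
  have s1 : ∑ i ∈ Finset.Ico 0 (m - d), (if i + d < m ∨ d ≤ i then p i else 0)
      = ∑ i ∈ Finset.range (m - d), p i := by
    rw [← Finset.range_eq_Ico]
    refine Finset.sum_congr rfl fun i hi => ?_
    have : i < m - d := Finset.mem_range.mp hi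
    have : i + d < m := by omega
    simp [this]
  have s2 : ∑ i ∈ Finset.Ico (m - d) d, (if i + d < m ∨ d ≤ i then p i else 0) = 0 := by
    apply Finset.sum_eq_zero
    intro i hi
    have h1 := Finset.mem_Ico.mp hi
    have : ¬ (i + d < m ∨ d ≤ i) := by omega
    simp [this]
  have s3 : ∑ i ∈ Finset.Ico d m, (if i + d < m ∨ d ≤ i then p i else 0)
      = ∑ i ∈ Finset.range (m - d), p (d + i) := by
    rw [Finset.sum_Ico_eq_sum_range]
    refine Finset.sum_congr rfl fun i hi => ?_
    simp
  rw [s1, s2, s3, Finset.sum_add_distrib]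
  ring

lemma horig_eq (hd : 2 ≤ d) (hdm : d < m) (hp : ∀ i < m, 0 < p i)
    (hp1 : ∑ i ∈ Finset.range m, p i = 1) (n : ℕ) :
    -∑ ω : {z : ℝ // z ∈ Zn m d n} × Fin m, vmap m d p n ω * Real.logb 2 (vmap m d p n ω)
      = hlevel m d p n + -(∑ i ∈ Finset.range m, p i * Real.logb 2 (p i)) := by
  rw [Fintype.sum_prod_type]
  have inner : ∀ z : {z : ℝ // z ∈ Zn m d n},
      (∑ j : Fin m, vmap m d p n (z, j) * Real.logb 2 (vmap m d p n (z, j)))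
      = Wn m d p n z.1 * Real.logb 2 (Wn m d p n z.1)
        + Wn m d p n z.1 * (∑ j : Fin m, p (j:ℕ) * Real.logb 2 (p (j:ℕ))) := by
    intro z
    have hWpos : 0 < Wn m d p n z.1 := Wn_pos hp z.2
    have expand : ∀ j : Fin m,
        vmap m d p n (z, j) * Real.logb 2 (vmap m d p n (z, j))
        = Wn m d p n z.1 * Real.logb 2 (Wn m d p n z.1) * p (j:ℕ)
          + Wn m d p n z.1 * (p (j:ℕ) * Real.logb 2 (p (j:ℕ))) := by
      intro j
      show Wn m d p n z.1 * p (j:ℕ) * Real.logb 2 (Wn m d p n z.1 * p (j:ℕ)) = _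
      rw [Real.logb_mul hWpos.ne' (hp _ j.isLt).ne']
      ring
    rw [Finset.sum_congr rfl fun j _ => expand j, Finset.sum_add_distrib,
      ← Finset.mul_sum, ← Finset.mul_sum]
    have hpsum : (∑ j : Fin m, p (j:ℕ)) = 1 := by
      rw [Fin.sum_univ_eq_sum_range]; exact hp1
    rw [hpsum, mul_one]
  rw [Finset.sum_congr rfl fun z _ => inner z, Finset.sum_add_distrib, ← Finset.sum_mul]
  have hW1 : (∑ z : {z : ℝ // z ∈ Zn m d n}, Wn m d p n z.1) = 1 := by
    rw [Finset.sum_coe_sort (Zn m d n) (fun z => Wn m d p n z)]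
    exact sum_Wn hp1 n
  rw [hW1, one_mul]
  have hz : (∑ z : {z : ℝ // z ∈ Zn m d n},
      Wn m d p n z.1 * Real.logb 2 (Wn m d p n z.1))
      = ∑ z ∈ Zn m d n, Wn m d p n z * Real.logb 2 (Wn m d p n z) := by
    exact Finset.sum_coe_sort (Zn m d n) (fun z => Wn m d p n z * Real.logb 2 (Wn m d p n z))
  rw [hz, hlevel_eq n]
  have hps : (∑ j : Fin m, p (j:ℕ) * Real.logb 2 (p (j:ℕ)))
      = ∑ i ∈ Finset.range m, p i * Real.logb 2 (p i) := by
    rw [Fin.sum_univ_eq_sum_range (fun j => p j * Real.logb 2 (p j)) m]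
  rw [hps]
  ring

lemma step (hd : 2 ≤ d) (hdm : d < m) (hm : m ≤ 2 * d - 1)
    (hp : ∀ i < m, 0 < p i) (hp1 : ∑ i ∈ Finset.range m, p i = 1) (n : ℕ) :
    hlevel m d p n + -(∑ i ∈ Finset.range m, p i * Real.logb 2 (p i))
        - ∑ i ∈ Finset.range (m - d), (p i + p (d + i)) ≤ hlevel m d p (n+1)
    ∧ hlevel m d p (n+1)
        ≤ hlevel m d p n + -(∑ i ∈ Finset.range m, p i * Real.logb 2 (p i)) := by
  have hrw : hlevel m d p (n+1)
      = -∑ z ∈ image (Fmap m d n) univ,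
          (∑ ω ∈ univ.filter (fun ω => Fmap m d n ω = z), vmap m d p n ω) *
            Real.logb 2 (∑ ω ∈ univ.filter (fun ω => Fmap m d n ω = z), vmap m d p n ω) := by
    rw [hlevel_eq (n+1), ← image_Fmap hd n]
    congr 1
    exact Finset.sum_congr rfl fun z _ => by rw [fiber_sum hd n z]
  constructor
  · -- lower bound
    rw [hrw, ← horig_eq hd hdm hp hp1 n, ← bad_mass hd hdm hm hp1 n]
    exact entropy_push_ge (Fmap m d n) (vmap m d p n) (vmap_pos hp)
      (fiber_card hd hdm hm n) _
      (fun ω₁ ω₂ hF hne => by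
        rw [Finset.mem_filter]
        refine ⟨mem_univ _, ?_⟩
        have hj₂ := ω₂.2.isLt
        rcases collision hd hdm hm hF hne with h | h
        · left; omega
        · right; omega)
  · rw [hrw, ← horig_eq hd hdm hp hp1 n]
    exact entropy_push_le (Fmap m d n) (vmap m d p n) (vmap_pos hp)

lemma sword_zero (σ : Fin 0 → Fin m) : Sword m d σ = 0 := by
  rw [sword_eq]; simp

lemma hlevel_zero (hp1 : ∑ i ∈ Finset.range m, p i = 1) : hlevel m d p 0 = 0 := by
  rw [hlevel_eq 0]
  have h1 : Zn m d 0 = {(0:ℝ)} := by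
    rw [Zn]
    ext x
    simp only [Finset.mem_image, Finset.mem_univ, true_and, Finset.mem_singleton]
    constructor
    · rintro ⟨σ, rfl⟩; exact sword_zero σ
    · rintro rfl; exact ⟨fun i => i.elim0, sword_zero _⟩
  have h2 : Wn m d p 0 0 = 1 := by
    rw [Wn, Finset.filter_true_of_mem (fun σ _ => sword_zero σ)]
    exact mass hp1 0
  rw [h1]
  simp [h2]

lemma hlevel_bounds (hd : 2 ≤ d) (hdm : d < m) (hm : m ≤ 2 * d - 1)
    (hp : ∀ i < m, 0 < p i) (hp1 : ∑ i ∈ Finset.range m, p i = 1) (n : ℕ) :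
    (n:ℝ) * (-(∑ i ∈ Finset.range m, p i * Real.logb 2 (p i))
        - ∑ i ∈ Finset.range (m - d), (p i + p (d + i))) ≤ hlevel m d p n
    ∧ hlevel m d p n ≤ (n:ℝ) * (-(∑ i ∈ Finset.range m, p i * Real.logb 2 (p i))) := by
  induction n with
  | zero => rw [hlevel_zero hp1]; norm_num
  | succ n ih =>
    obtain ⟨ih1, ih2⟩ := ih
    obtain ⟨s1, s2⟩ := step hd hdm hm hp hp1 n
    constructor
    · push_cast
      nlinarith [s1, ih1]
    · push_cast
      nlinarith [s2, ih2]

theorem stmt_16 (m d : ℕ) (hd : 2 ≤ d) (hdm : d < m) (hm : m ≤ 2 * d - 1)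
    (p : ℕ → ℝ) (hp : ∀ i < m, 0 < p i) (hp1 : ∑ i ∈ Finset.range m, p i = 1)
    (E : ℝ)
    (hE : Filter.Tendsto (fun n : ℕ => hlevel m d p n / (n * Real.logb 2 d))
      Filter.atTop (nhds E)) :
    E * Real.logb 2 d ∈
      Set.Icc
        (-(∑ i ∈ Finset.range m, p i * Real.logb 2 (p i)) -
          ∑ i ∈ Finset.range (m - d), (p i + p (d + i)))
        (-(∑ i ∈ Finset.range m, p i * Real.logb 2 (p i))) := by
  have hL : 0 < Real.logb 2 d := by
    apply Real.logb_pos (by norm_num)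
    have : 1 < d := by omega
    exact_mod_cast this
  have hE' : Filter.Tendsto (fun n : ℕ => hlevel m d p n / n)
      Filter.atTop (nhds (E * Real.logb 2 d)) := by
    have h1 := hE.mul_const (Real.logb 2 d)
    have heq : (fun n : ℕ => hlevel m d p n / (n * Real.logb 2 d) * Real.logb 2 d)
        = fun n : ℕ => hlevel m d p n / n := by
      funext n
      rw [div_mul_eq_mul_div, mul_div_mul_right _ _ hL.ne']
    rw [heq] at h1
    exact h1
  rw [Set.mem_Icc]
  constructor
  · apply ge_of_tendsto hE'
    filter_upwards [Filter.eventually_ge_atTop 1] with n hn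
    have hb := (hlevel_bounds hd hdm hm hp hp1 n).1
    have hn0 : (0:ℝ) < n := by exact_mod_cast hn
    rw [le_div_iff₀ hn0]
    nlinarith [hb]
  · apply le_of_tendsto hE'
    filter_upwards [Filter.eventually_ge_atTop 1] with n hn
    have hb := (hlevel_bounds hd hdm hm hp hp1 n).2
    have hn0 : (0:ℝ) < n := by exact_mod_cast hn
    rw [div_le_iff₀ hn0]
    nlinarith [hb]
end Recursion
end
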